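/- Let λ_1, …, λ_D be positive reals with Σλ_i = D and geometric mean g = (∏λ_i)^{1/D} < 1. Then Var[λ]/λ_max ≥ 2 · (1 − √(1 − g^D))/(1 + √(1 − g^D)) · (1 − g), where Var[λ] = (1/D)Σλ_i² − 1 and λ_max = max_i λ_i. -/

import Mathlib

open Finset

lemma log_ge_sinh {x : ℝ} (hx : 0 < x) (hx1 : x ≤ 1) : (x - 1/x)/2 ≤ Real.log x := by
  have h : Real.sinh (Real.log x) = (x - 1/x)/2 := by
    rw [Real.sinh_eq, Real.exp_log hx, Real.exp_neg, Real.exp_log hx]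
    ring
  rcases lt_or_eq_of_le hx1 with h1 | h1
  · have hl : Real.log x < 0 := Real.log_neg hx h1
    have h2 := Real.sinh_lt_self_iff.mpr hl
    rw [h] at h2; linarith
  · subst h1; simp

lemma log_ge_quad {x : ℝ} (hx : 1 ≤ x) : (x - 1) - (x - 1)^2/2 ≤ Real.log x := by
  set F : ℝ → ℝ := fun y => Real.log y - (y - 1) + (y - 1)^2/2 with hF
  have key : ∀ y : ℝ, 0 < y → HasDerivAt F (1/y - 1 + (y-1)) y := by
    intro y hy0
    have h1 : HasDerivAt Real.log (1/y) y := by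
      simpa [one_div] using Real.hasDerivAt_log (ne_of_gt hy0)
    have h2 : HasDerivAt (fun y : ℝ => y - 1) 1 y := (hasDerivAt_id y).sub_const 1
    have h3 : HasDerivAt (fun y : ℝ => (y - 1)^2/2) (y - 1) y := by
      have h4 : HasDerivAt (fun y : ℝ => (y - 1)^2/2) _ y := (h2.pow 2).div_const 2
      convert h4 using 1; ring
    exact (h1.sub h2).add h3
  have hmono : MonotoneOn F (Set.Ici 1) := by
    apply monotoneOn_of_deriv_nonneg (convex_Ici 1)
    · intro y hy
      exact ((key y (lt_of_lt_of_le one_pos hy)).continuousAt).continuousWithinAt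
    · intro y hy
      rw [interior_Ici] at hy
      exact ((key y (lt_trans one_pos hy)).differentiableAt).differentiableWithinAt
    · intro y hy
      rw [interior_Ici] at hy
      have hy0 : (0:ℝ) < y := lt_trans one_pos hy
      rw [(key y hy0).deriv]
      have h5 : 0 ≤ (y-1)^2 / y := div_nonneg (sq_nonneg _) (le_of_lt hy0)
      have h6 : (y-1)^2 / y = 1/y - 1 + (y-1) := by field_simp; ring
      linarith
  have h7 := hmono (Set.mem_Ici.mpr le_rfl) (Set.mem_Ici.mpr hx) hx
  simp only [hF, Real.log_one] at h7
  linarith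

/-- Pointwise Cartwright–Field estimate. -/
lemma cf_pointwise {m x : ℝ} (hm : 0 < m) (hm1 : m ≤ 1) (hmx : m ≤ x) (hx : 0 < x) :
    x - 1 - Real.log x ≤ (x - 1)^2 / (2*m) := by
  rcases le_total 1 x with h | h
  · have h1 := log_ge_quad h
    have h2 : (x-1)^2/2 ≤ (x-1)^2/(2*m) := by
      apply div_le_div_of_nonneg_left (sq_nonneg _) (by linarith) (by linarith)
    linarith
  · have h1 := log_ge_sinh hx h
    have h2 : (x-1)^2/(2*x) ≤ (x-1)^2/(2*m) := by
      apply div_le_div_of_nonneg_left (sq_nonneg _) (by linarith) (by linarith)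
    have h3 : x - 1 - ((x - 1/x)/2) = (x-1)^2/(2*x) := by field_simp; ring
    linarith

/-- AM-GM based bound for a pair of entries. -/
lemma pair_bound {D : ℕ} (hD : 0 < D) (lam : Fin D → ℝ)
    (hpos : ∀ i, 0 < lam i) (hsum : ∑ i, lam i = D)
    {j k : Fin D} (hjk : j ≠ k) :
    (∏ i, lam i) * ((lam j + lam k)/2)^2 ≤ lam j * lam k := by
  set c : ℝ := (lam j + lam k)/2 with hc
  have hc0 : 0 < c := by have := hpos j; have := hpos k; positivity
  set z : Fin D → ℝ := fun i => if i = j ∨ i = k then c else lam i with hz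
  have hz0 : ∀ i, 0 < z i := by
    intro i; simp only [hz]; split
    · exact hc0
    · exact hpos i
  have hP : ({j, k} : Finset (Fin D)) ⊆ univ := subset_univ _
  have hrest : ∀ i ∈ univ \ ({j, k} : Finset (Fin D)), z i = lam i := by
    intro i hi
    simp only [mem_sdiff, mem_insert, mem_singleton] at hi
    simp only [hz]
    rw [if_neg]; push_neg; exact ⟨fun h => hi.2 (Or.inl h), fun h => hi.2 (Or.inr h)⟩
  have hzj : z j = c := by simp [hz]
  have hzk : z k = c := by simp [hz]
  have hsplit := Finset.sum_sdiff hP (f := z)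
  have hsplit' := Finset.sum_sdiff hP (f := lam)
  have hpair : ∑ i ∈ ({j, k} : Finset (Fin D)), z i = c + c := by
    rw [Finset.sum_pair hjk, hzj, hzk]
  have hpair' : ∑ i ∈ ({j, k} : Finset (Fin D)), lam i = lam j + lam k := by
    rw [Finset.sum_pair hjk]
  have hzsum : ∑ i, z i = D := by
    rw [← hsplit, hpair, Finset.sum_congr rfl hrest]
    rw [← hsplit', hpair'] at hsum
    rw [hc]; linarith
  have hps := Finset.prod_sdiff hP (f := z)
  have hps' := Finset.prod_sdiff hP (f := lam)
  have hppair : ∏ i ∈ ({j, k} : Finset (Fin D)), z i = c * c := by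
    rw [Finset.prod_pair hjk, hzj, hzk]
  have hppair' : ∏ i ∈ ({j, k} : Finset (Fin D)), lam i = lam j * lam k := by
    rw [Finset.prod_pair hjk]
  have hD' : (D:ℝ) ≠ 0 := Nat.cast_ne_zero.mpr hD.ne'
  have hamgm := Real.geom_mean_le_arith_mean_weighted univ (fun _ => 1/(D:ℝ)) z
    (fun i _ => by positivity) (by simp [hD']) (fun i _ => (hz0 i).le)
  have hprodz : ∏ i, z i ≤ 1 := by
    rw [Real.finset_prod_rpow univ z (fun i _ => (hz0 i).le)] at hamgm
    have hsum1 : ∑ i, (1/(D:ℝ)) * z i = 1 := by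
      rw [← Finset.mul_sum, hzsum]; field_simp
    rw [hsum1] at hamgm
    have hpz : 0 < ∏ i, z i := Finset.prod_pos (fun i _ => hz0 i)
    rcases (Real.rpow_le_one_iff_of_pos hpz).mp hamgm with ⟨h1, h2⟩ | ⟨h1, h2⟩
    · exfalso; have : (0:ℝ) < 1/(D:ℝ) := by positivity
      linarith
    · exact h1
  have hrestpos : 0 < ∏ i ∈ univ \ ({j,k} : Finset (Fin D)), lam i :=
    Finset.prod_pos (fun i _ => hpos i)
  have heq : ∏ i, z i = (∏ i ∈ univ \ ({j,k} : Finset (Fin D)), lam i) * (c * c) := by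
    rw [← hps, hppair, Finset.prod_congr rfl hrest]
  have heq' : ∏ i, lam i = (∏ i ∈ univ \ ({j,k} : Finset (Fin D)), lam i) * (lam j * lam k) := by
    rw [← hps', hppair']
  rw [heq'] ; rw [heq] at hprodz
  have hjk0 : 0 < lam j * lam k := mul_pos (hpos j) (hpos k)
  calc (∏ i ∈ univ \ ({j,k} : Finset (Fin D)), lam i) * (lam j * lam k) * c^2
      = ((∏ i ∈ univ \ ({j,k} : Finset (Fin D)), lam i) * (c*c)) * (lam j * lam k) := by ring
    _ ≤ 1 * (lam j * lam k) := mul_le_mul_of_nonneg_right hprodz hjk0.le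
    _ = lam j * lam k := one_mul _

lemma quad_ratio {s a b : ℝ} (hs0 : 0 ≤ s) (ha : 0 < a) (hab : a ≤ b)
    (h : (1 - s^2) * ((a+b)/2)^2 ≤ a * b) : (1 - s) * b ≤ (1 + s) * a := by
  by_contra hcon
  push_neg at hcon
  have h2 : 0 < (1+s) * a := by positivity
  have h3 : 0 < (1+s) * b - (1-s) * a := by nlinarith
  nlinarith [mul_pos (by linarith : (0:ℝ) < (1-s)*b - (1+s)*a) h3]

/-- For positive reals `λ₁, …, λ_D` with `Σλᵢ = D` and geometric mean `g = (∏λᵢ)^{1/D} < 1`,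
`Var[λ]/λmax ≥ 2 · (1 − √(1 − g^D))/(1 + √(1 − g^D)) · (1 − g)`, where
`Var[λ] = (1/D)Σλᵢ² − 1`. -/
theorem variance_over_max_lower_bound {D : ℕ} (hD : 0 < D) (lam : Fin D → ℝ)
    (hpos : ∀ i, 0 < lam i) (hsum : ∑ i, lam i = D)
    (g : ℝ) (hg : g = (∏ i, lam i) ^ ((1 : ℝ) / D)) (hg1 : g < 1)
    (lmax : ℝ) (hmax : IsGreatest (Set.range lam) lmax) :
    2 * ((1 - Real.sqrt (1 - g ^ D)) / (1 + Real.sqrt (1 - g ^ D))) * (1 - g) ≤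
      ((1 / D) * ∑ i, lam i ^ 2 - 1) / lmax := by
  obtain ⟨i₀, hi₀⟩ := hmax.1
  have hub : ∀ i, lam i ≤ lmax := fun i => hmax.2 ⟨i, rfl⟩
  have hlmax0 : 0 < lmax := hi₀ ▸ hpos i₀
  have hprod0 : 0 < ∏ i, lam i := Finset.prod_pos fun i _ => hpos i
  have hg0 : 0 < g := hg ▸ Real.rpow_pos_of_pos hprod0 _
  have hD' : (D:ℝ) ≠ 0 := Nat.cast_ne_zero.mpr hD.ne'
  have hgD : g ^ D = ∏ i, lam i := by
    rw [hg, ← Real.rpow_natCast ((∏ i, lam i) ^ ((1:ℝ)/D)) D, ← Real.rpow_mul hprod0.le,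
      one_div, inv_mul_cancel₀ hD', Real.rpow_one]
  have hgD1 : g ^ D < 1 := pow_lt_one₀ hg0.le hg1 hD.ne'
  have hgD0 : 0 < g ^ D := pow_pos hg0 D
  set s := Real.sqrt (1 - g^D) with hsdef
  have hs0 : 0 ≤ s := Real.sqrt_nonneg _
  have hs2 : s^2 = 1 - g^D := Real.sq_sqrt (by linarith)
  have hs1 : s < 1 := by nlinarith
  have h1s : (0:ℝ) < 1 + s := by linarith
  -- key lower bound on each entry
  have hkey : ∀ i, (1 - s) * lmax ≤ (1 + s) * lam i := by
    intro i
    by_cases hji : i = i₀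
    · subst hji
      rw [hi₀]
      nlinarith
    · have hpb := pair_bound hD lam hpos hsum hji
      rw [hi₀] at hpb
      apply quad_ratio hs0 (hpos i) (hi₀ ▸ hub i)
      rw [hs2]
      have : (1 - (1 - g^D)) = g ^ D := by ring
      rw [this, hgD]
      exact hpb
  set t : ℝ := (1 - s)/(1 + s) * lmax with htdef
  have ht0 : 0 < t := by
    apply mul_pos (div_pos (by linarith) h1s) hlmax0
  have ht_le : ∀ i, t ≤ lam i := by
    intro i
    rw [htdef, div_mul_eq_mul_div, div_le_iff₀ h1s]
    calc (1 - s) * lmax ≤ (1 + s) * lam i := hkey i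
      _ = lam i * (1 + s) := by ring
  have ht1 : t ≤ 1 := by
    have h1 : ∑ _i : Fin D, t ≤ ∑ i, lam i := Finset.sum_le_sum fun i _ => ht_le i
    rw [hsum, Finset.sum_const, Finset.card_univ, Fintype.card_fin, nsmul_eq_mul] at h1
    have hDpos : (0:ℝ) < D := by positivity
    nlinarith
  -- Cartwright–Field
  have hcf : ∑ i, (lam i - 1 - Real.log (lam i)) ≤ ∑ i, (lam i - 1)^2 / (2*t) :=
    Finset.sum_le_sum fun i _ => cf_pointwise ht0 ht1 (ht_le i) (hpos i)
  have hlogsum : ∑ i, Real.log (lam i) = (D:ℝ) * Real.log g := by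
    rw [← Real.log_prod fun i _ => (hpos i).ne', ← hgD, Real.log_pow]
  have h1g : 1 - g ≤ - Real.log g := by
    have := Real.add_one_le_exp (Real.log g)
    rw [Real.exp_log hg0] at this; linarith
  have hL : ∑ i, (lam i - 1 - Real.log (lam i)) = -((D:ℝ) * Real.log g) := by
    rw [Finset.sum_sub_distrib, Finset.sum_sub_distrib, hsum, hlogsum,
      Finset.sum_const, Finset.card_univ, Fintype.card_fin, nsmul_eq_mul]
    ring
  have hR : ∑ i, (lam i - 1)^2 / (2*t) = ((∑ i, lam i ^ 2) - D) / (2*t) := by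
    rw [← Finset.sum_div]
    congr 1
    have : ∀ i ∈ univ, (lam i - 1)^2 = lam i ^2 - 2 * lam i + 1 := fun i _ => by ring
    rw [Finset.sum_congr rfl this, Finset.sum_add_distrib, Finset.sum_sub_distrib,
      ← Finset.mul_sum, hsum, Finset.sum_const, Finset.card_univ, Fintype.card_fin,
      nsmul_eq_mul]
    ring
  have hmain : (D:ℝ) * (1 - g) ≤ ((∑ i, lam i ^ 2) - D) / (2*t) := by
    rw [← hR]
    calc (D:ℝ) * (1 - g) ≤ (D:ℝ) * (- Real.log g) := by
          apply mul_le_mul_of_nonneg_left h1g (by positivity)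
      _ = -((D:ℝ) * Real.log g) := by ring
      _ = ∑ i, (lam i - 1 - Real.log (lam i)) := hL.symm
      _ ≤ _ := hcf
  -- conclude
  rw [le_div_iff₀ hlmax0]
  have hDpos : (0:ℝ) < D := by positivity
  have hfin : 2 * t * (1 - g) ≤ (1/(D:ℝ)) * (∑ i, lam i ^ 2) - 1 := by
    have h2t : (0:ℝ) < 2 * t := by linarith
    have h1 := (le_div_iff₀ h2t).mp hmain
    have h2 : 2 * t * (1 - g) = ((D:ℝ) * (1 - g) * (2 * t)) / D := by
      field_simp
    have h3 : (1/(D:ℝ)) * (∑ i, lam i ^ 2) - 1 = ((∑ i, lam i ^ 2) - (D:ℝ)) / D := by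
      field_simp
    rw [h2, h3]
    exact (div_le_div_iff_of_pos_right hDpos).mpr h1
  calc 2 * ((1 - s) / (1 + s)) * (1 - g) * lmax = 2 * t * (1 - g) := by
        rw [htdef]; ring
    _ ≤ (1/(D:ℝ)) * (∑ i, lam i ^ 2) - 1 := hfin
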